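/- Every statistically complete S-metric space is complete; that is, if every statistically Cauchy sequence in (X,S) is statistically convergent, then every Cauchy sequence in (X,S) is convergent. -/

import Mathlib

open Filter

open scoped Classical in
/-- Natural density: `A ⊆ ℕ` has density `d` if `|{k ∈ A : k < n}|/n → d`. -/
def HasDensity (A : Set ℕ) (d : ℝ) : Prop :=
  Filter.Tendsto
    (fun n : ℕ => (((Finset.range n).filter (fun k => k ∈ A)).card : ℝ) / n)
    Filter.atTop (nhds d)

/-- `S` is an S-metric on `X`. -/
structure IsSMetric {X : Type*} (S : X → X → X → ℝ) : Prop where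
  nonneg : ∀ x y z, 0 ≤ S x y z
  eq_zero_iff : ∀ x y z, S x y z = 0 ↔ x = y ∧ y = z
  triangle : ∀ x y z a, S x y z ≤ S x x a + S y y a + S z z a

/-- Ordinary convergence of a sequence in an S-metric space. -/
def SConvergesTo {X : Type*} (S : X → X → X → ℝ) (x : ℕ → X) (l : X) : Prop :=
  ∀ ε : ℝ, 0 < ε → ∃ N : ℕ, ∀ n ≥ N, S (x n) (x n) l < ε

/-- Statistical convergence of a sequence in an S-metric space. -/
def SStatConvergesTo {X : Type*} (S : X → X → X → ℝ) (x : ℕ → X) (l : X) : Prop :=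
  ∀ ε : ℝ, 0 < ε → HasDensity {n : ℕ | ε ≤ S (x n) (x n) l} 0

/-- Cauchy sequence in an S-metric space. -/
def SCauchy {X : Type*} (S : X → X → X → ℝ) (x : ℕ → X) : Prop :=
  ∀ ε : ℝ, 0 < ε → ∃ k : ℕ, ∀ n ≥ k, ∀ m ≥ k, S (x n) (x n) (x m) < ε

/-- Statistically Cauchy sequence in an S-metric space. -/
def SStatCauchy {X : Type*} (S : X → X → X → ℝ) (x : ℕ → X) : Prop :=
  ∀ ε : ℝ, 0 < ε → ∃ N : ℕ, HasDensity {n : ℕ | ε ≤ S (x n) (x n) (x N)} 0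

/-- Statistically bounded sequence in an S-metric space. -/
def SStatBounded {X : Type*} (S : X → X → X → ℝ) (x : ℕ → X) : Prop :=
  ∀ u : X, ∃ B : ℝ, 0 < B ∧ HasDensity {n : ℕ | B ≤ S (x n) (x n) u} 0

/-- Rough convergence with roughness degree `r`. -/
def SRoughConvergesTo {X : Type*} (S : X → X → X → ℝ) (r : ℝ) (x : ℕ → X) (p : X) : Prop :=
  ∀ ε : ℝ, 0 < ε → ∃ k : ℕ, ∀ n ≥ k, S (x n) (x n) p < r + ε

/-- Rough statistical convergence with roughness degree `r`. -/
def SRoughStatConvergesTo {X : Type*} (S : X → X → X → ℝ) (r : ℝ) (x : ℕ → X) (p : X) : Prop :=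
  ∀ ε : ℝ, 0 < ε → HasDensity {n : ℕ | r + ε ≤ S (x n) (x n) p} 0

/-- The rough statistical limit set `st-LIM^r x_n`. -/
def stLIM {X : Type*} (S : X → X → X → ℝ) (r : ℝ) (x : ℕ → X) : Set X :=
  {p : X | SRoughStatConvergesTo S r x p}

/-- The topology on `X` generated by the open balls of the S-metric. -/
def sBallTopology {X : Type*} (S : X → X → X → ℝ) : TopologicalSpace X :=
  TopologicalSpace.generateFrom
    {B : Set X | ∃ c : X, ∃ ε : ℝ, 0 < ε ∧ B = {y : X | S y y c < ε}}

lemma hasDensity_zero_of_lt (A : Set ℕ) (k : ℕ) (h : ∀ n ∈ A, n < k) :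
    HasDensity A 0 := by
  classical
  unfold HasDensity
  have h0 : Tendsto (fun n : ℕ => (k : ℝ) / n) atTop (nhds 0) :=
    tendsto_const_div_atTop_nhds_zero_nat (k : ℝ)
  refine squeeze_zero (fun n => ?_) (fun n => ?_) h0
  · positivity
  · rcases Nat.eq_zero_or_pos n with rfl | hn
    · simp
    · have hnr : (0:ℝ) < n := by exact_mod_cast hn
      have hcard : (((Finset.range n).filter (fun j => j ∈ A)).card : ℝ) ≤ k := by
        have : ((Finset.range n).filter (fun j => j ∈ A)) ⊆ Finset.range k := by
          intro j hj
          rw [Finset.mem_filter] at hj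
          exact Finset.mem_range.mpr (h j hj.2)
        calc (((Finset.range n).filter (fun j => j ∈ A)).card : ℝ)
            ≤ ((Finset.range k).card : ℝ) := by exact_mod_cast Finset.card_le_card this
          _ = k := by simp
      exact div_le_div_of_nonneg_right hcard hnr.le

lemma exists_not_mem_of_hasDensity_zero (A : Set ℕ) (hA : HasDensity A 0) (k : ℕ) :
    ∃ m ≥ k, m ∉ A := by
  classical
  by_contra h
  push_neg at h
  have hle : ∀ n ≥ k + 1, (1 : ℝ) - k / n ≤
      (((Finset.range n).filter (fun j => j ∈ A)).card : ℝ) / n := by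
    intro n hn'
    have hn : n ≥ k := le_trans (Nat.le_succ k) hn'
    have hnp : 0 < n := lt_of_lt_of_le (Nat.succ_pos k) hn'
    have hsub : Finset.Ico k n ⊆ (Finset.range n).filter (fun j => j ∈ A) := by
      intro j hj
      rw [Finset.mem_Ico] at hj
      rw [Finset.mem_filter, Finset.mem_range]
      exact ⟨hj.2, h j hj.1⟩
    have hcard : ((n - k : ℕ) : ℝ) ≤
        (((Finset.range n).filter (fun j => j ∈ A)).card : ℝ) := by
      have := Finset.card_le_card hsub
      rw [Nat.card_Ico] at this
      exact_mod_cast this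
    have hnpos : (0 : ℝ) < n := by exact_mod_cast hnp
    rw [sub_le_iff_le_add, ← add_div, le_div_iff₀ hnpos]
    have hck : ((n - k : ℕ) : ℝ) = (n : ℝ) - k := by
      rw [Nat.cast_sub hn]
    nlinarith [hcard]
  have h1 : Tendsto (fun n : ℕ => (1 : ℝ) - k / n) atTop (nhds 1) := by
    have := (tendsto_const_div_atTop_nhds_zero_nat (k : ℝ)).const_sub 1
    simpa using this
  have := le_of_tendsto_of_tendsto h1 hA
    (Filter.eventually_atTop.mpr ⟨k + 1, hle⟩)
  linarith

lemma s_symm {X : Type*} (S : X → X → X → ℝ) (hS : IsSMetric S) (x y : X) :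
    S x x y = S y y x := by
  have hx : S x x x = 0 := (hS.eq_zero_iff x x x).mpr ⟨rfl, rfl⟩
  have hy : S y y y = 0 := (hS.eq_zero_iff y y y).mpr ⟨rfl, rfl⟩
  have h1 := hS.triangle x x y x
  have h2 := hS.triangle y y x y
  rw [hx] at h1
  rw [hy] at h2
  linarith

theorem stmt_7 {X : Type*} [Nonempty X] (S : X → X → X → ℝ) (hS : IsSMetric S)
    (hcomp : ∀ x : ℕ → X, SStatCauchy S x → ∃ l : X, SStatConvergesTo S x l) :
    ∀ x : ℕ → X, SCauchy S x → ∃ l : X, SConvergesTo S x l := by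
  intro x hx
  have hstat : SStatCauchy S x := by
    intro ε hε
    obtain ⟨k, hk⟩ := hx ε hε
    refine ⟨k, hasDensity_zero_of_lt _ k ?_⟩
    intro n hn
    by_contra hlt
    push_neg at hlt
    exact absurd (hk n hlt k le_rfl) (not_lt.mpr hn)
  obtain ⟨l, hl⟩ := hcomp x hstat
  refine ⟨l, ?_⟩
  intro ε hε
  obtain ⟨k, hk⟩ := hx (ε / 3) (by linarith)
  have hd := hl (ε / 3) (by linarith)
  obtain ⟨m, hmk, hm⟩ := exists_not_mem_of_hasDensity_zero _ hd k
  simp only [Set.mem_setOf_eq, not_le] at hm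
  refine ⟨k, fun n hn => ?_⟩
  have htri := hS.triangle (x n) (x n) l (x m)
  have hsym : S l l (x m) = S (x m) (x m) l := s_symm S hS l (x m)
  have := hk n hn m hmk
  linarith
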